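/- arXiv:math-ph/0212030 — 6 statements merged into one kernel-verified Lean document; each statement's English description precedes it below -/
import Mathlib

section
/- Let e = (1 + γ₀)/2 in the real spacetime algebra Cℓ(1,3). Then for every element x of Cℓ(1,3) there exists an element ψ of the even subalgebra Cℓ⁰(1,3) such that x * e = ψ * e. In other words, the left ideal Cℓ(1,3)·e coincides with the set Cℓ⁰(1,3)·e of products of even elements with e. -/
open CliffordAlgebra

noncomputable def Q13 : QuadraticForm ℝ (Fin 4 → ℝ) :=
  QuadraticMap.weightedSumSquares ℝ ![(1 : ℝ), -1, -1, -1]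

/-- The spacetime algebra `Cℓ(1,3)`. -/
noncomputable abbrev STA : Type := CliffordAlgebra Q13

/-- The generators `γμ`. -/
noncomputable def γ (μ : Fin 4) : STA := ι Q13 (Pi.single μ 1)

lemma gamma0_sq : γ 0 * γ 0 = 1 := by
  rw [γ, ι_sq_scalar]
  have : Q13 (Pi.single 0 1) = 1 := by
    simp [Q13, QuadraticMap.weightedSumSquares_apply, Fin.sum_univ_four, Pi.single_apply]
  rw [this, map_one]

lemma gamma0_mul_e : γ 0 * (((1 : ℝ)/2) • (1 + γ 0)) = ((1 : ℝ)/2) • (1 + γ 0) := by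
  rw [mul_smul_comm, mul_add, mul_one, gamma0_sq, add_comm]

lemma sum_decompose (x : STA) :
    x = (DirectSum.decompose (evenOdd Q13) x 0 : STA)
      + (DirectSum.decompose (evenOdd Q13) x 1 : STA) := by
  classical
  have h := DirectSum.sum_support_decompose (evenOdd Q13) x
  conv_lhs => rw [← h]
  rw [Finset.sum_subset (Finset.subset_univ _) (by
    intro i _ hi
    simpa using DFinsupp.notMem_support_iff.mp hi)]
  exact Fin.sum_univ_two _

theorem even_ideal_eq :
    ∀ x : STA, ∃ ψ ∈ CliffordAlgebra.even Q13,
      x * (((1 : ℝ)/2) • (1 + γ 0)) = ψ * (((1 : ℝ)/2) • (1 + γ 0)) := by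
  intro x
  set x0 : STA := (DirectSum.decompose (evenOdd Q13) x 0 : STA) with hx0
  set x1 : STA := (DirectSum.decompose (evenOdd Q13) x 1 : STA) with hx1
  refine ⟨x0 + x1 * γ 0, ?_, ?_⟩
  · have h0 : x0 ∈ evenOdd Q13 0 := SetLike.coe_mem _
    have h1 : x1 ∈ evenOdd Q13 1 := SetLike.coe_mem _
    have hg : γ 0 ∈ evenOdd Q13 1 := ι_mem_evenOdd_one Q13 _
    have : x1 * γ 0 ∈ evenOdd Q13 (1 + 1) := SetLike.mul_mem_graded h1 hg
    have h2 : x1 * γ 0 ∈ evenOdd Q13 0 := by simpa [show (1 + 1 : ZMod 2) = 0 from rfl] using this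
    exact add_mem h0 h2
  · conv_lhs => rw [sum_decompose x]
    rw [add_mul, add_mul, mul_assoc, gamma0_mul_e]
end

section
/- Let e = (1 + γ₀)/2 in the real spacetime algebra Cℓ(1,3). The ℝ-linear map from the even subalgebra Cℓ⁰(1,3) to Cℓ(1,3) given by ψ ↦ ψ * e is injective; hence every element of the left ideal Cℓ(1,3)·e has a unique representation ψ·e with ψ even. -/
open CliffordAlgebra

/-- The pseudoscalar `γ₅ = γ₀γ₁γ₂γ₃`. -/
noncomputable def γ₅ : STA := γ 0 * γ 1 * γ 2 * γ 3

/-- The map `ψ ↦ ψ * e` with `e = (1 + γ₀)/2` is injective on the even subalgebra. -/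
theorem even_mul_idempotent_injective :
    Function.Injective
      (fun ψ : CliffordAlgebra.even Q13 => (ψ : STA) * (((1 : ℝ)/2) • (1 + γ 0))) := by
  intro ψ₁ ψ₂ h
  simp only [mul_smul_comm, mul_add, mul_one] at h
  have h2 : (ψ₁ : STA) + ψ₁ * γ 0 = ψ₂ + ψ₂ * γ 0 := by
    have := smul_right_injective STA (by norm_num : (1:ℝ)/2 ≠ 0) h
    exact this
  set x : STA := (ψ₁ : STA) - ψ₂ with hx
  have hx0 : x ∈ evenOdd Q13 0 := Submodule.sub_mem _ ψ₁.2 ψ₂.2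
  have hx1 : x ∈ evenOdd Q13 1 := by
    have : x = ψ₂ * γ 0 - ψ₁ * γ 0 := by
      rw [hx, sub_eq_sub_iff_add_eq_add, add_comm ((ψ₂:STA) * γ 0)]; exact h2
    rw [this]
    exact Submodule.sub_mem _
      (by simpa [γ] using SetLike.mul_mem_graded ψ₂.2 (ι_mem_evenOdd_one Q13 (Pi.single 0 1)))
      (by simpa [γ] using SetLike.mul_mem_graded ψ₁.2 (ι_mem_evenOdd_one Q13 (Pi.single 0 1)))
  have hxz : x = 0 := by
    have h1 := DirectSum.decompose_of_mem_same (evenOdd Q13) hx1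
    have hne := DirectSum.decompose_of_mem_ne (evenOdd Q13) hx0
      (show (0 : ZMod 2) ≠ 1 by decide)
    rw [hne] at h1
    exact h1.symm
  exact Subtype.ext (sub_eq_zero.mp hxz)
end

section
/- (Canonical (Lounesto–Hestenes) decomposition of a Dirac–Hestenes spinor.) Let ψ be an element of the even subalgebra Cℓ⁰(1,3) and let σ, ω ∈ ℝ satisfy ψ * reverse(ψ) = σ·1 + ω·γ₅ with (σ, ω) ≠ (0, 0). Then there exist a real number ρ > 0, a real number β, and an element R of the even subalgebra Cℓ⁰(1,3) with R * reverse(R) = 1, such that ψ = √ρ · (cos(β/2)·1 + sin(β/2)·γ₅) * R. (Note that since γ₅² = −1, the factor cos(β/2) + sin(β/2)γ₅ equals exp((β/2)γ₅).) -/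
open CliffordAlgebra

lemma γ_def (μ : Fin 4) : ι Q13 (Pi.single μ 1) = γ μ := rfl

lemma γ_sq (μ : Fin 4) : γ μ * γ μ = algebraMap ℝ STA (![(1:ℝ),-1,-1,-1] μ) := by
  rw [γ, ι_sq_scalar]
  congr 1
  fin_cases μ <;>
    simp [Q13, QuadraticMap.weightedSumSquares_apply, Fin.sum_univ_four, Pi.single_apply]

lemma γ_anti {μ ν : Fin 4} (h : μ ≠ ν) : γ μ * γ ν = -(γ ν * γ μ) := by
  have := CliffordAlgebra.ι_mul_ι_add_swap (Q := Q13) (Pi.single μ 1) (Pi.single ν 1)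
  have hp : QuadraticMap.polar Q13 (Pi.single μ 1) (Pi.single ν 1) = 0 := by
    fin_cases μ <;> fin_cases ν <;> first | (exact absurd rfl h) |
      simp [QuadraticMap.polar, Q13, QuadraticMap.weightedSumSquares_apply,
        Fin.sum_univ_four, Pi.single_apply]
  rw [hp, map_zero] at this
  exact eq_neg_of_add_eq_zero_left this

lemma γ_swap {μ ν : Fin 4} (h : μ ≠ ν) (x : STA) :
    γ μ * (γ ν * x) = -(γ ν * (γ μ * x)) := by
  rw [← mul_assoc, γ_anti h, neg_mul, mul_assoc]

lemma γ0_sq (x : STA) : γ 0 * (γ 0 * x) = x := by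
  rw [← mul_assoc, γ_sq]; simp

lemma γ1_sq (x : STA) : γ 1 * (γ 1 * x) = -x := by
  rw [← mul_assoc, γ_sq]; simp [Algebra.algebraMap_eq_smul_one]

lemma γ2_sq (x : STA) : γ 2 * (γ 2 * x) = -x := by
  rw [← mul_assoc, γ_sq]; simp [Algebra.algebraMap_eq_smul_one]

lemma γ3_sq (x : STA) : γ 3 * (γ 3 * x) = -x := by
  rw [← mul_assoc, γ_sq]; simp [Algebra.algebraMap_eq_smul_one]

lemma g5_sq : γ₅ * γ₅ = -1 := by
  have h10 := γ_swap (μ := 1) (ν := 0) (by decide)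
  have h20 := γ_swap (μ := 2) (ν := 0) (by decide)
  have h21 := γ_swap (μ := 2) (ν := 1) (by decide)
  have h30 := γ_swap (μ := 3) (ν := 0) (by decide)
  have h31 := γ_swap (μ := 3) (ν := 1) (by decide)
  have h32 := γ_swap (μ := 3) (ν := 2) (by decide)
  have e32 : γ 3 * γ 2 = -(γ 2 * γ 3) := γ_anti (by decide)
  have e33 : γ 3 * γ 3 = -1 := by rw [γ_sq]; simp [Algebra.algebraMap_eq_smul_one]
  have e22 : γ 2 * γ 2 = -1 := by rw [γ_sq]; simp [Algebra.algebraMap_eq_smul_one]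
  have e11 : γ 1 * γ 1 = -1 := by rw [γ_sq]; simp [Algebra.algebraMap_eq_smul_one]
  have e00 : γ 0 * γ 0 = 1 := by rw [γ_sq]; simp
  simp only [γ₅, mul_assoc]
  simp [h10, h20, h21, h30, h31, h32, γ0_sq, γ1_sq, γ2_sq, γ3_sq, e32, e33, e22, e11, e00]

set_option maxRecDepth 10000 in
lemma rev_g5 : reverse (Q := Q13) γ₅ = γ₅ := by
  have h10 := γ_swap (μ := 1) (ν := 0) (by decide)
  have h20 := γ_swap (μ := 2) (ν := 0) (by decide)
  have h21 := γ_swap (μ := 2) (ν := 1) (by decide)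
  have h30 := γ_swap (μ := 3) (ν := 0) (by decide)
  have h31 := γ_swap (μ := 3) (ν := 1) (by decide)
  have h32 := γ_swap (μ := 3) (ν := 2) (by decide)
  have e10 : γ 1 * γ 0 = -(γ 0 * γ 1) := γ_anti (by decide)
  have e20 : γ 2 * γ 0 = -(γ 0 * γ 2) := γ_anti (by decide)
  have e21 : γ 2 * γ 1 = -(γ 1 * γ 2) := γ_anti (by decide)
  have e30 : γ 3 * γ 0 = -(γ 0 * γ 3) := γ_anti (by decide)
  have e31 : γ 3 * γ 1 = -(γ 1 * γ 3) := γ_anti (by decide)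
  have e32' : γ 3 * γ 2 = -(γ 2 * γ 3) := γ_anti (by decide)
  simp only [γ₅, γ, reverse.map_mul, reverse_ι]
  simp only [γ_def]
  simp only [mul_assoc]
  rw [e10, mul_neg, mul_neg, h20, mul_neg, neg_neg, e21, mul_neg, mul_neg, h30,
    neg_neg, h31, mul_neg, e32', mul_neg, mul_neg, neg_neg]

lemma g5_even : γ₅ ∈ CliffordAlgebra.even Q13 := by
  have h1 : γ 0 * γ 1 ∈ CliffordAlgebra.even Q13 :=
    CliffordAlgebra.ι_mul_ι_mem_evenOdd_zero _ _ _
  have h2 : γ 2 * γ 3 ∈ CliffordAlgebra.even Q13 :=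
    CliffordAlgebra.ι_mul_ι_mem_evenOdd_zero _ _ _
  have := mul_mem h1 h2
  simpa [γ₅, mul_assoc] using this

lemma mul_key (x y : ℝ) :
    (x • (1:STA) + y • γ₅) * (x • (1:STA) - y • γ₅) = (x*x + y*y) • 1 := by
  simp only [mul_sub, add_mul, smul_mul_smul_comm, g5_sq, one_mul, mul_one, smul_neg, sub_neg_eq_add]
  module

lemma mul_key' (x y : ℝ) :
    (x • (1:STA) - y • γ₅) * (x • (1:STA) + y • γ₅) = (x*x + y*y) • 1 := by
  simp only [sub_mul, mul_add, smul_mul_smul_comm, g5_sq, one_mul, mul_one, smul_neg, sub_neg_eq_add]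
  module

lemma mul_key2 (x y : ℝ) :
    (x • (1:STA) + y • γ₅) * (x • (1:STA) + y • γ₅)
      = (x*x - y*y) • 1 + (2*(x*y)) • γ₅ := by
  simp only [mul_add, add_mul, smul_mul_smul_comm, g5_sq, one_mul, mul_one, smul_neg]
  module

/-- Canonical (Lounesto–Hestenes) decomposition of a Dirac–Hestenes spinor. -/
theorem canonical_decomposition (ψ : STA) (hψ : ψ ∈ CliffordAlgebra.even Q13)
    (σ ω : ℝ) (h : ψ * reverse (Q := Q13) ψ = σ • (1 : STA) + ω • γ₅)
    (hne : (σ, ω) ≠ (0, 0)) :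
    ∃ ρ : ℝ, 0 < ρ ∧ ∃ β : ℝ, ∃ R ∈ CliffordAlgebra.even Q13,
      R * reverse (Q := Q13) R = 1 ∧
      ψ = Real.sqrt ρ •
        ((Real.cos (β / 2) • (1 : STA) + Real.sin (β / 2) • γ₅) * R) := by
  set z : ℂ := ⟨σ, ω⟩ with hz
  have hz0 : z ≠ 0 := by
    intro hzz
    rw [Complex.ext_iff] at hzz
    exact hne (by rw [Prod.mk.injEq]; exact ⟨hzz.1, hzz.2⟩)
  set r : ℝ := ‖z‖ with hr
  have hrpos : 0 < r := norm_pos_iff.mpr hz0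
  set β : ℝ := z.arg with hβ
  have hσ : σ = r * Real.cos β := by
    rw [Complex.cos_arg hz0]; field_simp [hr]; rw [mul_comm]
  have hω : ω = r * Real.sin β := by
    rw [Complex.sin_arg]; field_simp [hr]; rw [mul_comm]
  set c := Real.cos (β/2) with hc
  set s := Real.sin (β/2) with hs
  have hcs : c*c + s*s = 1 := by
    have := Real.sin_sq_add_cos_sq (β/2); nlinarith
  set e : STA := c • (1:STA) + s • γ₅ with he
  set e' : STA := c • (1:STA) - s • γ₅ with he'
  have hee' : e * e' = 1 := by rw [he, he', mul_key, hcs, one_smul]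
  have he'e : e' * e = 1 := by rw [he, he', mul_key', hcs, one_smul]
  have hβ2 : β = 2 * (β/2) := by ring
  have hcos : c*c - s*s = Real.cos β := by
    rw [hβ2, Real.cos_two_mul, ← hc]; nlinarith [hcs]
  have hsin : 2*(c*s) = Real.sin β := by
    rw [hβ2, Real.sin_two_mul, ← hc, ← hs]; ring
  have hee : e * e = Real.cos β • (1:STA) + Real.sin β • γ₅ := by
    rw [he, mul_key2, hcos, hsin]
  -- reverse fixes e and e'
  have hreve' : reverse (Q := Q13) e' = e' := by
    rw [he']
    simp [map_sub, map_smul, rev_g5]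
  -- the rotor
  set a : ℝ := (Real.sqrt r)⁻¹ with ha
  set R : STA := a • (e' * ψ) with hR
  have hsr : Real.sqrt r * Real.sqrt r = r := Real.mul_self_sqrt hrpos.le
  have hsr0 : Real.sqrt r ≠ 0 := by positivity
  have he'even : e' ∈ CliffordAlgebra.even Q13 := by
    rw [he']
    exact Subalgebra.sub_mem _ (Subalgebra.smul_mem _ (one_mem _) c)
      (Subalgebra.smul_mem _ g5_even s)
  have hReven : R ∈ CliffordAlgebra.even Q13 :=
    Subalgebra.smul_mem _ (mul_mem he'even hψ) a
  have hrevR : reverse (Q := Q13) R = a • (reverse (Q := Q13) ψ * e') := by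
    rw [hR, map_smul, reverse.map_mul, hreve']
  have hZ : σ • (1:STA) + ω • γ₅ = r • (e * e) := by
    rw [hee, smul_add, smul_smul, smul_smul, hσ, hω]
  have hRrevR : R * reverse (Q := Q13) R = 1 := by
    rw [hrevR, hR, smul_mul_smul_comm]
    have hmid : e' * ψ * (reverse (Q := Q13) ψ * e') = e' * (ψ * reverse (Q := Q13) ψ) * e' := by
      noncomm_ring
    rw [hmid, h, hZ]
    have : e' * r • (e * e) * e' = r • (1:STA) := by
      rw [mul_smul_comm, smul_mul_assoc]
      congr 1
      calc e' * (e * e) * e' = (e' * e) * (e * e') := by noncomm_ring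
        _ = 1 := by rw [he'e, hee', one_mul]
    rw [this, smul_smul, ha]
    rw [show ((Real.sqrt r)⁻¹ * (Real.sqrt r)⁻¹ * r) = 1 by
      rw [← mul_inv, hsr, inv_mul_cancel₀ hrpos.ne']]
    exact one_smul _ _
  refine ⟨r, hrpos, β, R, hReven, hRrevR, ?_⟩
  rw [← hc, ← hs, ← he, hR, mul_smul_comm, smul_smul]
  rw [show e * (e' * ψ) = (e * e') * ψ by noncomm_ring, hee', one_mul]
  rw [ha, mul_inv_cancel₀ hsr0, one_smul]
end

section
/- (Porteous-type characterization of the spin group in Cℓ(1,3).) Let u be an element of the even subalgebra Cℓ⁰(1,3) with u * reverse(u) = 1. Then u is a unit with inverse reverse(u), and there exists an ℝ-linear map f : ℝ⁴ → ℝ⁴ preserving the Minkowski quadratic form (Q(f v) = Q(v) for all v ∈ ℝ⁴) such that u * ι(v) * reverse(u) = ι(f v) for all v ∈ ℝ⁴. Thus conjugation by u induces a Lorentz transformation on 1-vectors. -/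
open CliffordAlgebra

namespace PorteousAux

section General

variable {R : Type*} [CommRing R] {M : Type*} [AddCommGroup M] [Module R M]
variable {Q Q' : QuadraticForm R M} {B : LinearMap.BilinForm R M}

theorem contractLeft_mul_ι (d : Module.Dual R M) (x : CliffordAlgebra Q) (m : M) :
    contractLeft (Q := Q) d (x * ι Q m) =
      contractLeft (Q := Q) d x * ι Q m + d m • involute x := by
  induction x using CliffordAlgebra.left_induction with
  | algebraMap r =>
    rw [← Algebra.smul_def, map_smul, contractLeft_ι, contractLeft_algebraMap,
      zero_mul, zero_add, AlgHom.commutes, Algebra.smul_def, Algebra.smul_def, ← map_mul,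
      ← map_mul, mul_comm]
  | add x y hx hy =>
    rw [add_mul, map_add, map_add, hx, hy, map_add, add_mul, smul_add]
    abel
  | ι_mul x a hx =>
    rw [mul_assoc, contractLeft_ι_mul, contractLeft_ι_mul, hx, map_mul, involute_ι, mul_add,
      mul_smul_comm, sub_mul, smul_mul_assoc, neg_mul, smul_neg, mul_assoc]
    abel

theorem contractRight_ι_mul' (d : Module.Dual R M) (a : M) (x : CliffordAlgebra Q) :
    contractRight (Q := Q) (ι Q a * x) d =
      ι Q a * contractRight (Q := Q) x d + d a • involute x := by
  rw [contractRight_eq, reverse.map_mul, reverse_ι, contractLeft_mul_ι, map_add, map_smul,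
    reverse.map_mul, reverse_ι, ← contractRight_eq, reverse_involute, reverse_reverse]

theorem contractLeft_involute' (d : Module.Dual R M) (x : CliffordAlgebra Q) :
    contractLeft (Q := Q) d (involute x) = - involute (contractLeft (Q := Q) d x) := by
  induction x using CliffordAlgebra.left_induction with
  | algebraMap r => simp
  | add x y hx hy => rw [map_add, map_add, hx, hy, map_add, map_add, neg_add]
  | ι_mul x a hx =>
    rw [map_mul, involute_ι, neg_mul, map_neg, contractLeft_ι_mul, contractLeft_ι_mul, hx,
      map_sub, map_smul, map_mul, involute_ι, neg_mul]
    simp only [mul_smul_comm, mul_neg, neg_mul, smul_neg, neg_smul]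

theorem contractLeft_contractRight_comm (d d' : Module.Dual R M) (x : CliffordAlgebra Q) :
    contractLeft (Q := Q) d' (contractRight (Q := Q) x d) =
      contractRight (Q := Q) (contractLeft (Q := Q) d' x) d := by
  induction x using CliffordAlgebra.left_induction with
  | algebraMap r => simp
  | add x y hx hy =>
    simp only [map_add, LinearMap.add_apply, hx, hy]
  | ι_mul x a hx =>
    rw [contractRight_ι_mul', contractLeft_ι_mul, map_add, contractLeft_ι_mul, hx, map_smul,
      contractLeft_involute', map_sub, LinearMap.sub_apply, map_smul, LinearMap.smul_apply,
      contractRight_ι_mul', smul_neg]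
    abel

variable (h : B.toQuadraticMap = Q' - Q)

include h in
theorem changeForm_mul_ι (hB : ∀ a b, B a b = B b a) (x : CliffordAlgebra Q) (m : M) :
    changeForm h (x * ι Q m) =
      changeForm h x * ι Q' m - contractRight (Q := Q') (changeForm h x) (B m) := by
  induction x using CliffordAlgebra.left_induction with
  | algebraMap r =>
    rw [← Algebra.smul_def, map_smul, changeForm_ι, changeForm_algebraMap, ← Algebra.smul_def,
      contractRight_algebraMap, sub_zero]
  | add x y hx hy =>
    rw [add_mul, map_add, hx, hy, map_add, add_mul, map_add, LinearMap.add_apply]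
    abel
  | ι_mul x a hx =>
    rw [mul_assoc, changeForm_ι_mul, changeForm_ι_mul, hx, map_sub, contractLeft_mul_ι,
      sub_mul, mul_sub, map_sub, LinearMap.sub_apply, contractRight_ι_mul',
      contractLeft_contractRight_comm, hB a m, ← mul_assoc]
    abel

include h in
theorem changeForm_reverse (hB : ∀ a b, B a b = B b a) (x : CliffordAlgebra Q) :
    changeForm h (reverse (Q := Q) x) = reverse (Q := Q') (changeForm h x) := by
  induction x using CliffordAlgebra.left_induction with
  | algebraMap r => rw [reverse.commutes, changeForm_algebraMap, reverse.commutes]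
  | add x y hx hy => rw [map_add, map_add, hx, hy, map_add, map_add]
  | ι_mul x a hx =>
    rw [reverse.map_mul, reverse_ι, changeForm_mul_ι h hB, hx, changeForm_ι_mul, map_sub,
      reverse.map_mul, reverse_ι]
    congr 1
    rw [contractRight_eq, reverse_reverse]

theorem contractLeft_mem_pow (d : Module.Dual R M) (k : ℕ) (v : CliffordAlgebra Q)
    (hv : v ∈ (LinearMap.range (ι Q)) ^ k) :
    contractLeft (Q := Q) d v ∈ evenOdd Q ((k : ZMod 2) + 1) := by
  induction hv using Submodule.pow_induction_on_left' with
  | algebraMap r =>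
    rw [contractLeft_algebraMap]
    exact Submodule.zero_mem _
  | add x y n hx hy ihx ihy =>
    rw [map_add]; exact Submodule.add_mem _ ihx ihy
  | mem_mul a ha i x hx ihx =>
    obtain ⟨a, rfl⟩ := ha
    rw [contractLeft_ι_mul]
    have e1 : ∀ m : ZMod 2, m + 1 + 1 = m := by decide
    have e2 : (((i + 1 : ℕ) : ZMod 2)) + 1 = ((i : ZMod 2) + 1) + 1 := by push_cast; ring
    rw [e2]
    refine Submodule.sub_mem _ ?_ ?_
    · refine Submodule.smul_mem _ _ ?_
      rw [e1]
      exact Submodule.mem_iSup_of_mem ⟨i, rfl⟩ hx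
    · have := SetLike.mul_mem_graded (ι_mem_evenOdd_one Q a) ihx
      rwa [add_comm] at this

theorem contractLeft_mem_evenOdd {n : ZMod 2} (d : Module.Dual R M) {x : CliffordAlgebra Q}
    (hx : x ∈ evenOdd Q n) : contractLeft (Q := Q) d x ∈ evenOdd Q (n + 1) := by
  induction x, hx using CliffordAlgebra.evenOdd_induction with
  | range_ι_pow v hv =>
    have := contractLeft_mem_pow d n.val v hv
    rwa [ZMod.natCast_zmod_val] at this
  | add x y hx hy ihx ihy => rw [map_add]; exact Submodule.add_mem _ ihx ihy
  | ι_mul_ι_mul m₁ m₂ x hx ihx =>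
    rw [mul_assoc, contractLeft_ι_mul, contractLeft_ι_mul, mul_sub, mul_smul_comm]
    have e1 : ∀ m : ZMod 2, 1 + m = m + 1 := by decide
    have e2 : ∀ m : ZMod 2, 1 + (1 + (m + 1)) = m + 1 := by decide
    refine Submodule.sub_mem _ ?_ (Submodule.sub_mem _ ?_ ?_)
    · refine Submodule.smul_mem _ _ ?_
      have := SetLike.mul_mem_graded (ι_mem_evenOdd_one Q m₂) hx
      rwa [e1] at this
    · refine Submodule.smul_mem _ _ ?_
      have := SetLike.mul_mem_graded (ι_mem_evenOdd_one Q m₁) hx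
      rwa [e1] at this
    · have h2 := SetLike.mul_mem_graded (ι_mem_evenOdd_one Q m₂) ihx
      have h3 := SetLike.mul_mem_graded (ι_mem_evenOdd_one Q m₁) h2
      rwa [e2] at h3

include h in
theorem changeForm_mem_odd {x : CliffordAlgebra Q} (hx : x ∈ evenOdd Q 1) :
    changeForm h x ∈ evenOdd Q' 1 := by
  induction x, hx using CliffordAlgebra.odd_induction with
  | ι v => rw [changeForm_ι]; exact ι_mem_evenOdd_one Q' v
  | add x y hx hy ihx ihy => rw [map_add]; exact Submodule.add_mem _ ihx ihy
  | ι_mul_ι_mul m₁ m₂ x hx ihx =>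
    rw [mul_assoc, changeForm_ι_mul, changeForm_ι_mul]
    have e1 : (1 + 1 : ZMod 2) = 0 := by decide
    have h2 : changeForm h (ι Q m₂ * x) ∈ evenOdd Q' 0 := by
      rw [changeForm_ι_mul]
      refine Submodule.sub_mem _ ?_ ?_
      · have := SetLike.mul_mem_graded (ι_mem_evenOdd_one Q' m₂) ihx
        rwa [e1] at this
      · have := contractLeft_mem_evenOdd (B m₂) ihx
        rwa [e1] at this
    rw [← changeForm_ι_mul]
    refine Submodule.sub_mem _ ?_ ?_
    · have := SetLike.mul_mem_graded (ι_mem_evenOdd_one Q' m₁) h2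
      rwa [add_zero] at this
    · have := contractLeft_mem_evenOdd (B m₁) h2
      rwa [zero_add] at this

end General

section Exterior

variable {R : Type*} [CommRing R] {M : Type*} [AddCommGroup M] [Module R M]

theorem ext_mul_ι_comm (n : ℕ) (z : ExteriorAlgebra R M)
    (hz : z ∈ (LinearMap.range (ExteriorAlgebra.ι R : M →ₗ[R] ExteriorAlgebra R M)) ^ n)
    (m : M) :
    z * ExteriorAlgebra.ι R m = ((-1 : R)) ^ n • (ExteriorAlgebra.ι R m * z) := by
  induction hz using Submodule.pow_induction_on_left' with
  | algebraMap r =>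
    rw [pow_zero, one_smul, Algebra.commutes]
  | add x y i hx hy ihx ihy => rw [add_mul, ihx, ihy, mul_add, smul_add]
  | mem_mul a ha i x hx ihx =>
    obtain ⟨a, rfl⟩ := ha
    have hanti : ExteriorAlgebra.ι R a * ExteriorAlgebra.ι R m =
        -(ExteriorAlgebra.ι R m * ExteriorAlgebra.ι R a) :=
      eq_neg_of_add_eq_zero_left (ExteriorAlgebra.ι_add_mul_swap a m)
    rw [mul_assoc, ihx, mul_smul_comm, ← mul_assoc, hanti, neg_mul, pow_succ, mul_smul,
      neg_one_smul, smul_neg, mul_assoc, smul_neg]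

theorem ext_reverse_pow (n : ℕ) (z : ExteriorAlgebra R M)
    (hz : z ∈ (LinearMap.range (ExteriorAlgebra.ι R : M →ₗ[R] ExteriorAlgebra R M)) ^ n) :
    reverse (Q := (0 : QuadraticForm R M)) z = ((-1 : R)) ^ (n.choose 2) • z := by
  induction hz using Submodule.pow_induction_on_left' with
  | algebraMap r => rw [reverse.commutes]; norm_num
  | add x y i hx hy ihx ihy => rw [map_add, ihx, ihy, smul_add]
  | mem_mul a ha i x hx ihx =>
    obtain ⟨a, rfl⟩ := ha
    rw [reverse.map_mul, reverse_ι, ihx, smul_mul_assoc, ext_mul_ι_comm i x hx a, smul_smul,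
      ← pow_add]
    congr 2
    rw [Nat.choose_succ_succ, Nat.choose_one_right, add_comm]

theorem ext_involute_pow (n : ℕ) (z : ExteriorAlgebra R M)
    (hz : z ∈ (LinearMap.range (ExteriorAlgebra.ι R : M →ₗ[R] ExteriorAlgebra R M)) ^ n) :
    involute (Q := (0 : QuadraticForm R M)) z = ((-1 : R)) ^ n • z := by
  induction hz using Submodule.pow_induction_on_left' with
  | algebraMap r => rw [AlgHom.commutes]; norm_num
  | add x y i hx hy ihx ihy => rw [map_add, ihx, ihy, smul_add]
  | mem_mul a ha i x hx ihx =>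
    obtain ⟨a, rfl⟩ := ha
    rw [map_mul, involute_ι, ihx, pow_succ, mul_smul, neg_one_smul, mul_smul_comm, neg_mul,
      smul_neg]

theorem proj_reverse (m : ℕ) (x : ExteriorAlgebra R M) :
    GradedAlgebra.proj (fun n : ℕ => ⋀[R]^n M) m (reverse (Q := (0 : QuadraticForm R M)) x) =
      reverse (Q := (0 : QuadraticForm R M)) (GradedAlgebra.proj (fun n : ℕ => ⋀[R]^n M) m x) := by
  induction x using DirectSum.Decomposition.inductionOn (fun n : ℕ => ⋀[R]^n M) with
  | zero => simp
  | add x y hx hy => simp only [map_add, hx, hy]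
  | homogeneous hz =>
    rename_i i
    obtain ⟨z, hz⟩ := hz
    show GradedAlgebra.proj (fun n : ℕ => ⋀[R]^n M) m (reverse z) =
      reverse (GradedAlgebra.proj (fun n : ℕ => ⋀[R]^n M) m z)
    have hrz : reverse z ∈ (⋀[R]^i M) := by
      rw [ext_reverse_pow i z hz]; exact Submodule.smul_mem _ _ hz
    by_cases him : i = m
    · subst him
      rw [GradedAlgebra.proj_apply, GradedAlgebra.proj_apply,
        DirectSum.decompose_of_mem_same (fun n : ℕ => ⋀[R]^n M) hz, DirectSum.decompose_of_mem_same (fun n : ℕ => ⋀[R]^n M) hrz]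
    · rw [GradedAlgebra.proj_apply, GradedAlgebra.proj_apply,
        DirectSum.decompose_of_mem_ne (fun n : ℕ => ⋀[R]^n M) hz him, DirectSum.decompose_of_mem_ne (fun n : ℕ => ⋀[R]^n M) hrz him,
        map_zero]

theorem proj_involute (m : ℕ) (x : ExteriorAlgebra R M) :
    GradedAlgebra.proj (fun n : ℕ => ⋀[R]^n M) m (involute (Q := (0 : QuadraticForm R M)) x) =
      involute (Q := (0 : QuadraticForm R M)) (GradedAlgebra.proj (fun n : ℕ => ⋀[R]^n M) m x) := by
  induction x using DirectSum.Decomposition.inductionOn (fun n : ℕ => ⋀[R]^n M) with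
  | zero => simp
  | add x y hx hy => simp only [map_add, hx, hy]
  | homogeneous hz =>
    rename_i i
    obtain ⟨z, hz⟩ := hz
    show GradedAlgebra.proj (fun n : ℕ => ⋀[R]^n M) m (involute z) =
      involute (GradedAlgebra.proj (fun n : ℕ => ⋀[R]^n M) m z)
    have hrz : involute z ∈ (⋀[R]^i M) := by
      rw [ext_involute_pow i z hz]; exact Submodule.smul_mem _ _ hz
    by_cases him : i = m
    · subst him
      rw [GradedAlgebra.proj_apply, GradedAlgebra.proj_apply,
        DirectSum.decompose_of_mem_same (fun n : ℕ => ⋀[R]^n M) hz, DirectSum.decompose_of_mem_same (fun n : ℕ => ⋀[R]^n M) hrz]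
    · rw [GradedAlgebra.proj_apply, GradedAlgebra.proj_apply,
        DirectSum.decompose_of_mem_ne (fun n : ℕ => ⋀[R]^n M) hz him, DirectSum.decompose_of_mem_ne (fun n : ℕ => ⋀[R]^n M) hrz him,
        map_zero]

end Exterior

section Specific

local notation "V" => (Fin 4 → ℝ)

set_option synthInstance.maxHeartbeats 1000000 in
theorem power_bot (n : ℕ) (hn : 5 ≤ n) : (⋀[ℝ]^n V) = ⊥ := by
  obtain ⟨k, rfl⟩ : ∃ k, n = 5 + k := ⟨n - 5, by omega⟩
  have h5 : (⋀[ℝ]^5 V) = ⊥ := by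
    rw [← ExteriorAlgebra.ιMulti_span_fixedDegree, Submodule.span_eq_bot]
    rintro _ ⟨v, rfl⟩
    apply AlternatingMap.map_linearDependent
    intro hli
    have hcard := hli.fintype_card_le_finrank
    rw [Fintype.card_fin, Module.finrank_fin_fun] at hcard
    omega
  show (LinearMap.range (ExteriorAlgebra.ι ℝ : V →ₗ[ℝ] ExteriorAlgebra ℝ V)) ^ (5 + k) = ⊥
  rw [pow_add]
  have h5' : (LinearMap.range (ExteriorAlgebra.ι ℝ : V →ₗ[ℝ] ExteriorAlgebra ℝ V)) ^ 5 = ⊥ := h5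
  rw [h5', Submodule.bot_mul]

theorem odd_choose_two {m : ℕ} (hm : m % 4 = 3) : Odd (m.choose 2) := by
  obtain ⟨k, rfl⟩ : ∃ k, m = 4 * k + 3 := ⟨m / 4, by omega⟩
  rw [Nat.choose_two_right]
  have h1 : 4 * k + 3 - 1 = 4 * k + 2 := by omega
  have h2 : (4 * k + 3) * (4 * k + 2) = 2 * ((4 * k + 3) * (2 * k + 1)) := by ring
  rw [h1, h2, Nat.mul_div_cancel_left _ two_pos]
  exact Odd.mul ⟨2 * k + 1, by ring⟩ ⟨k, by ring⟩

theorem ext_odd_rev_mem (y : ExteriorAlgebra ℝ V)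
    (hodd : y ∈ evenOdd (0 : QuadraticForm ℝ V) 1)
    (hrev : reverse (Q := (0 : QuadraticForm ℝ V)) y = y) :
    y ∈ LinearMap.range (ExteriorAlgebra.ι ℝ : V →ₗ[ℝ] ExteriorAlgebra ℝ V) := by
  classical
  have hinv : involute (Q := (0 : QuadraticForm ℝ V)) y = -y :=
    involute_eq_of_mem_odd hodd
  have hcomp : ∀ m : ℕ, m ≠ 1 →
      GradedAlgebra.proj (fun n : ℕ => ⋀[ℝ]^n V) m y = 0 := by
    intro m hm
    set z := GradedAlgebra.proj (fun n : ℕ => ⋀[ℝ]^n V) m y with hzdef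
    have hmem : z ∈ (⋀[ℝ]^m V) := by
      rw [hzdef, GradedAlgebra.proj_apply]; exact SetLike.coe_mem _
    have half : ∀ w : ExteriorAlgebra ℝ V, w = -w → w = 0 := by
      intro w hw
      have h2 : (2 : ℝ) • w = 0 := by
        rw [two_smul]
        nth_rewrite 2 [hw]
        exact add_neg_cancel w
      have := smul_eq_zero.mp h2
      simpa using this
    rcases Nat.even_or_odd m with he | ho
    · -- even degree: killed by the involution
      have h1 : involute (Q := (0 : QuadraticForm ℝ V)) z = -z := by
        rw [hzdef, ← proj_involute, hinv, map_neg]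
      rw [ext_involute_pow m z hmem, he.neg_one_pow, one_smul] at h1
      exact half z h1
    · by_cases h4 : m % 4 = 3
      · have hoc := odd_choose_two h4
        have h1 : reverse (Q := (0 : QuadraticForm ℝ V)) z = z := by
          rw [hzdef, ← proj_reverse, hrev]
        rw [ext_reverse_pow m z hmem, hoc.neg_one_pow, neg_one_smul] at h1
        exact half z h1.symm
      · have h5 : 5 ≤ m := by
          rcases ho with ⟨j, hj⟩
          omega
        rw [power_bot m h5] at hmem
        simpa using hmem
  rw [← DirectSum.sum_support_decompose (fun n : ℕ => ⋀[ℝ]^n V) y]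
  apply Submodule.sum_mem
  intro i _
  by_cases hi : i = 1
  · subst hi
    have hmem : ((DirectSum.decompose (fun n : ℕ => ⋀[ℝ]^n V) y 1 : ⋀[ℝ]^1 V) :
        ExteriorAlgebra ℝ V) ∈ (⋀[ℝ]^1 V) := SetLike.coe_mem _
    have he : (⋀[ℝ]^1 (Fin 4 → ℝ)) =
        LinearMap.range (ExteriorAlgebra.ι ℝ : (Fin 4 → ℝ) →ₗ[ℝ] ExteriorAlgebra ℝ (Fin 4 → ℝ)) :=
      pow_one _
    exact (le_of_eq he) hmem
  · have h0 := hcomp i hi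
    rw [GradedAlgebra.proj_apply] at h0
    rw [h0]
    exact Submodule.zero_mem _

instance : Module.Finite ℝ (ExteriorAlgebra ℝ V) := by
  rw [Module.finite_def]
  set p : Submodule ℝ (ExteriorAlgebra ℝ V) :=
    LinearMap.range (ExteriorAlgebra.ι ℝ : V →ₗ[ℝ] ExteriorAlgebra ℝ V) with hp
  have hpfg : p.FG := by
    rw [hp, LinearMap.range_eq_map]
    exact Submodule.FG.map _ (Module.finite_def.mp inferInstance)
  have htop : (⊤ : Submodule ℝ (ExteriorAlgebra ℝ V)) =
      p ^ 0 ⊔ p ^ 1 ⊔ p ^ 2 ⊔ p ^ 3 ⊔ p ^ 4 := by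
    apply le_antisymm _ le_top
    rw [← CliffordAlgebra.iSup_ι_range_eq_top]
    apply iSup_le
    intro i
    match i with
    | 0 => exact le_sup_of_le_left (le_sup_of_le_left (le_sup_of_le_left le_sup_left))
    | 1 => exact le_sup_of_le_left (le_sup_of_le_left (le_sup_of_le_left le_sup_right))
    | 2 => exact le_sup_of_le_left (le_sup_of_le_left le_sup_right)
    | 3 => exact le_sup_of_le_left le_sup_right
    | 4 => exact le_sup_right
    | (n + 5) =>
      have : (⋀[ℝ]^(n + 5) V) = ⊥ := power_bot _ (by omega)
      rw [show (LinearMap.range (ι (0 : QuadraticForm ℝ V)) : Submodule ℝ _) ^ (n + 5) =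
        (⋀[ℝ]^(n + 5) V) from rfl, this]
      exact bot_le
  rw [htop]
  exact ((((hpfg.pow 0).sup (hpfg.pow 1)).sup (hpfg.pow 2)).sup (hpfg.pow 3)).sup (hpfg.pow 4)

end Specific

end PorteousAux

open PorteousAux

/-- Porteous-type characterization: conjugation by an even unit-norm element is a
Lorentz transformation on 1-vectors. -/
theorem spin_group_acts_as_lorentz (u : STA) (hu : u ∈ CliffordAlgebra.even Q13)
    (huu : u * reverse (Q := Q13) u = 1) :
    reverse (Q := Q13) u * u = 1 ∧
    ∃ f : (Fin 4 → ℝ) →ₗ[ℝ] (Fin 4 → ℝ),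
      (∀ v : Fin 4 → ℝ, Q13 (f v) = Q13 v) ∧
      ∀ v : Fin 4 → ℝ, u * ι Q13 v * reverse (Q := Q13) u = ι Q13 (f v) := by
  classical
  letI : Invertible (2 : ℝ) := invertibleOfNonzero two_ne_zero
  have h0 : (QuadraticMap.associated (R := ℝ) (M := Fin 4 → ℝ) (-Q13)).toQuadraticMap
      = 0 - Q13 := changeForm.associated_neg_proof
  have hB : ∀ a b : Fin 4 → ℝ,
      (QuadraticMap.associated (R := ℝ) (M := Fin 4 → ℝ) (-Q13)) a b =
      (QuadraticMap.associated (R := ℝ) (M := Fin 4 → ℝ) (-Q13)) b a := by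
    intro a b
    have := (QuadraticMap.associated_isSymm ℝ (-Q13)) b a
    simpa using this.symm
  haveI hfin : Module.Finite ℝ STA := Module.Finite.equiv (equivExterior Q13).symm
  -- Part 1 : the reversed product
  have h1 : reverse (Q := Q13) u * u = 1 := by
    have hsurj : Function.Surjective (LinearMap.mulLeft ℝ u) := fun y =>
      ⟨reverse (Q := Q13) u * y, by rw [LinearMap.mulLeft_apply, ← mul_assoc, huu, one_mul]⟩
    have hinj : Function.Injective (LinearMap.mulLeft ℝ u) :=
      (LinearMap.injective_iff_surjective).mpr hsurj
    apply hinj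
    rw [LinearMap.mulLeft_apply, LinearMap.mulLeft_apply, ← mul_assoc, huu, one_mul, mul_one]
  -- injectivity of ι and algebraMap
  have hιinj : Function.Injective (ι Q13) := by
    intro a b hab
    have := congrArg (changeForm h0) hab
    rw [changeForm_ι, changeForm_ι] at this
    exact (ExteriorAlgebra.ι_inj ℝ a b).mp this
  have halginj : Function.Injective (algebraMap ℝ STA) := by
    intro a b hab
    have := congrArg (changeForm h0) hab
    rw [changeForm_algebraMap, changeForm_algebraMap] at this
    exact (ExteriorAlgebra.algebraMap_leftInverse (Fin 4 → ℝ)).injective this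
  -- conjugation maps vectors to vectors
  have hmem : ∀ v : Fin 4 → ℝ,
      u * ι Q13 v * reverse (Q := Q13) u ∈ LinearMap.range (ι Q13) := by
    intro v
    set x := u * ι Q13 v * reverse (Q := Q13) u with hxdef
    have hxodd : x ∈ evenOdd Q13 1 := by
      have h01 := SetLike.mul_mem_graded
        (SetLike.mul_mem_graded hu (ι_mem_evenOdd_one Q13 v))
        ((reverse_mem_evenOdd_iff (Q := Q13)).mpr hu)
      rwa [zero_add, add_zero] at h01
    have hxrev : reverse (Q := Q13) x = x := by
      rw [hxdef, reverse.map_mul, reverse.map_mul, reverse_reverse, reverse_ι, mul_assoc]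
    have hyodd : changeForm h0 x ∈ evenOdd (0 : QuadraticForm ℝ (Fin 4 → ℝ)) 1 :=
      changeForm_mem_odd h0 hxodd
    have hyrev : reverse (Q := (0 : QuadraticForm ℝ (Fin 4 → ℝ))) (changeForm h0 x) =
        changeForm h0 x := by
      rw [← changeForm_reverse h0 hB, hxrev]
    obtain ⟨w, hw⟩ := ext_odd_rev_mem (changeForm h0 x) hyodd hyrev
    refine ⟨w, ?_⟩
    have hcf : changeForm h0 (ι Q13 w) = changeForm h0 x := by
      rw [changeForm_ι]; exact hw
    exact (changeFormEquiv h0).injective hcf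
  -- build the linear map f
  set F : (Fin 4 → ℝ) →ₗ[ℝ] STA :=
    (LinearMap.mulRight ℝ (reverse (Q := Q13) u)).comp
      ((LinearMap.mulLeft ℝ u).comp (ι Q13)) with hFdef
  have hFapp : ∀ v, F v = u * ι Q13 v * reverse (Q := Q13) u := fun v => rfl
  have hFmem : ∀ v, F v ∈ LinearMap.range (ι Q13) := fun v => by rw [hFapp]; exact hmem v
  set e : (Fin 4 → ℝ) ≃ₗ[ℝ] LinearMap.range (ι Q13) :=
    LinearEquiv.ofInjective (ι Q13) hιinj with hedef
  set f : (Fin 4 → ℝ) →ₗ[ℝ] (Fin 4 → ℝ) :=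
    e.symm.toLinearMap.comp (F.codRestrict _ hFmem) with hfdef
  have hf : ∀ v, ι Q13 (f v) = u * ι Q13 v * reverse (Q := Q13) u := by
    intro v
    have h2 : e (f v) = F.codRestrict _ hFmem v := by
      rw [hfdef]
      exact e.apply_symm_apply _
    have h3 : (e (f v) : STA) = F v := congrArg Subtype.val h2
    rw [hedef] at h3
    rw [← hFapp v, ← h3]
    rfl
  refine ⟨h1, f, ?_, fun v => (hf v).symm⟩
  intro v
  apply halginj
  rw [← ι_sq_scalar Q13 (f v), hf v]
  have : u * ι Q13 v * reverse (Q := Q13) u * (u * ι Q13 v * reverse (Q := Q13) u) =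
      algebraMap ℝ STA (Q13 v) := by
    calc u * ι Q13 v * reverse (Q := Q13) u * (u * ι Q13 v * reverse (Q := Q13) u)
        = u * (ι Q13 v * ((reverse (Q := Q13) u * u) * (ι Q13 v * reverse (Q := Q13) u))) := by
          simp only [mul_assoc]
      _ = u * (ι Q13 v * ι Q13 v) * reverse (Q := Q13) u := by
          rw [h1, one_mul]; simp only [mul_assoc]
      _ = u * algebraMap ℝ STA (Q13 v) * reverse (Q := Q13) u := by rw [ι_sq_scalar]
      _ = algebraMap ℝ STA (Q13 v) * (u * reverse (Q := Q13) u) := by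
          rw [show u * algebraMap ℝ STA (Q13 v) = algebraMap ℝ STA (Q13 v) * u from
            (Algebra.commutes _ _).symm, mul_assoc]
      _ = algebraMap ℝ STA (Q13 v) := by rw [huu, mul_one]
  rw [this]
end

section
/- (The kernel of the adjoint representation of the spin group of Minkowski space is ℤ₂.) Let u be an element of the even subalgebra Cℓ⁰(1,3) with u * reverse(u) = 1. If u commutes with every 1-vector, i.e., u * ι(v) = ι(v) * u for all v ∈ ℝ⁴ (equivalently, u * ι(v) * reverse(u) = ι(v) for all v), then u = 1 or u = −1. -/
open CliffordAlgebra

namespace AK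

abbrev V : Type := Finset (Fin 4) → ℝ

def ee : Fin 4 → ℝ := ![1, -1, -1, -1]

lemma ee_mul_self (μ : Fin 4) : ee μ * ee μ = 1 := by fin_cases μ <;> norm_num [ee]

/-- sign: (-1)^(number of elements of S below μ) -/
def sgn (μ : Fin 4) (S : Finset (Fin 4)) : ℝ := (-1) ^ (S.filter (· < μ)).card

lemma sgn_mul_self (μ S) : sgn μ S * sgn μ S = 1 := by
  rw [sgn, ← pow_add]
  exact (neg_one_pow_eq_one_iff_even (by norm_num)).2 (Even.add_self _)

lemma sgn_insert_of_lt {ν μ : Fin 4} (S : Finset (Fin 4)) (hν : ν ∉ S) (h : ν < μ) :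
    sgn μ (insert ν S) = -sgn μ S := by
  rw [sgn, sgn, Finset.filter_insert, if_pos h,
    Finset.card_insert_of_notMem (by simp [hν]), pow_succ, mul_comm]
  ring

lemma sgn_insert_of_not_lt {ν μ : Fin 4} (S : Finset (Fin 4)) (h : ¬ ν < μ) :
    sgn μ (insert ν S) = sgn μ S := by
  rw [sgn, sgn, Finset.filter_insert, if_neg h]

lemma sgn_erase_self (μ : Fin 4) (S : Finset (Fin 4)) : sgn μ (S.erase μ) = sgn μ S := by
  rw [sgn, sgn, Finset.filter_erase, Finset.erase_eq_of_notMem (by simp)]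

/-- The fermionic creation/annihilation operator for direction μ. -/
def op (μ : Fin 4) : V →ₗ[ℝ] V where
  toFun c T := if μ ∈ T then sgn μ T * c (T.erase μ) else ee μ * (sgn μ T * c (insert μ T))
  map_add' c d := by funext T; by_cases h : μ ∈ T <;> simp [h] <;> ring
  map_smul' r c := by funext T; by_cases h : μ ∈ T <;> simp [h] <;> ring

lemma op_apply (μ : Fin 4) (c : V) (T : Finset (Fin 4)) :
    op μ c T = if μ ∈ T then sgn μ T * c (T.erase μ) else ee μ * (sgn μ T * c (insert μ T)) := rfl

lemma op_op_same (μ : Fin 4) (c : V) : op μ (op μ c) = ee μ • c := by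
  funext T
  by_cases h : μ ∈ T
  · rw [Pi.smul_apply, op_apply, if_pos h, op_apply, if_neg (Finset.notMem_erase μ T),
      Finset.insert_erase h, sgn_erase_self]
    rw [smul_eq_mul]; ring_nf
    rw [sq, sgn_mul_self, one_mul]
  · rw [Pi.smul_apply, op_apply, if_neg h, op_apply, if_pos (Finset.mem_insert_self μ T),
      Finset.erase_insert h, ← sgn_erase_self μ (insert μ T), Finset.erase_insert h]
    rw [smul_eq_mul]; ring_nf
    rw [sq, sgn_mul_self, mul_one]

end AK

namespace AK

lemma sgn_erase_of_lt {μ ν : Fin 4} {T : Finset (Fin 4)} (hμ : μ ∈ T) (h : μ < ν) :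
    sgn ν (T.erase μ) = -sgn ν T := by
  conv_rhs => rw [← Finset.insert_erase hμ]
  rw [sgn_insert_of_lt _ (Finset.notMem_erase μ T) h, neg_neg]

lemma sgn_erase_of_not_lt {μ ν : Fin 4} {T : Finset (Fin 4)} (hμ : μ ∈ T) (h : ¬ μ < ν) :
    sgn ν (T.erase μ) = sgn ν T := by
  conv_rhs => rw [← Finset.insert_erase hμ]
  rw [sgn_insert_of_not_lt _ h]

lemma op_op_of_lt {μ ν : Fin 4} (h : μ < ν) (c : V) : op μ (op ν c) = -op ν (op μ c) := by
  have hne : μ ≠ ν := ne_of_lt h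
  have hnlt : ¬ ν < μ := asymm h
  funext T
  simp only [op_apply, Pi.neg_apply]
  by_cases hμ : μ ∈ T <;> by_cases hν : ν ∈ T
  · rw [if_pos hμ, if_pos hν, if_pos (Finset.mem_erase.2 ⟨hne.symm, hν⟩),
      if_pos (Finset.mem_erase.2 ⟨hne, hμ⟩),
      sgn_erase_of_lt hμ h, sgn_erase_of_not_lt hν hnlt, Finset.erase_right_comm]
    ring
  · rw [if_pos hμ, if_neg hν, if_neg (fun hc => hν (Finset.mem_of_mem_erase hc)),
      if_pos (Finset.mem_insert_of_mem hμ),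
      sgn_erase_of_lt hμ h, sgn_insert_of_not_lt _ hnlt, Finset.erase_insert_of_ne hne.symm]
    ring
  · rw [if_neg hμ, if_pos hν, if_pos (Finset.mem_insert_of_mem hν),
      if_neg (fun hc => hμ (Finset.mem_of_mem_erase hc)),
      sgn_insert_of_lt _ hμ h, sgn_erase_of_not_lt hν hnlt, Finset.erase_insert_of_ne hne]
    ring
  · rw [if_neg hμ, if_neg hν, if_neg (by simp [hne.symm, hν]), if_neg (by simp [hne, hμ]),
      sgn_insert_of_lt _ hμ h, sgn_insert_of_not_lt _ hnlt, Finset.insert_comm]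
    ring

lemma op_op_of_ne {μ ν : Fin 4} (h : μ ≠ ν) (c : V) : op μ (op ν c) = -op ν (op μ c) := by
  rcases h.lt_or_gt with h' | h'
  · exact op_op_of_lt h' c
  · rw [op_op_of_lt h' c, neg_neg]

lemma op_car (μ ν : Fin 4) :
    op μ * op ν + op ν * op μ = if μ = ν then (2 * ee μ) • (1 : Module.End ℝ V) else 0 := by
  rcases eq_or_ne μ ν with rfl | h
  · rw [if_pos rfl]
    refine LinearMap.ext fun c => ?_
    simp only [LinearMap.add_apply, Module.End.mul_apply, op_op_same, LinearMap.smul_apply,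
      Module.End.one_apply, two_mul, add_smul]
  · rw [if_neg h]
    refine LinearMap.ext fun c => ?_
    simp only [LinearMap.add_apply, Module.End.mul_apply, LinearMap.zero_apply]
    rw [op_op_of_ne h c]
    exact neg_add_cancel ((op ν) ((op μ) c))

noncomputable def fv : (Fin 4 → ℝ) →ₗ[ℝ] Module.End ℝ V :=
  ∑ μ : Fin 4, (LinearMap.proj μ).smulRight (op μ)

lemma fv_apply (v : Fin 4 → ℝ) : fv v = ∑ μ : Fin 4, v μ • op μ := by
  simp [fv, LinearMap.smulRight_apply]

lemma fv_single (μ : Fin 4) : fv (Pi.single μ 1) = op μ := by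
  rw [fv_apply, Finset.sum_eq_single μ]
  · simp
  · intro ν _ hν; simp [Pi.single_apply, hν.symm]
  · simp

set_option synthInstance.maxHeartbeats 1000000 in
lemma fv_sq (v : Fin 4 → ℝ) :
    fv v * fv v = algebraMap ℝ (Module.End ℝ V) (Q13 v) := by
  have expand : fv v * fv v
      = ∑ μ : Fin 4, ∑ ν : Fin 4, (v μ * v ν) • (op μ * op ν) := by
    rw [fv_apply, Finset.sum_mul_sum]
    simp_rw [smul_mul_smul_comm]
  have expand' : fv v * fv v
      = ∑ μ : Fin 4, ∑ ν : Fin 4, (v μ * v ν) • (op ν * op μ) := by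
    rw [expand, Finset.sum_comm]
    simp_rw [mul_comm]
  have key : (2:ℝ) • (fv v * fv v) = (2:ℝ) • algebraMap ℝ (Module.End ℝ V) (Q13 v) := by
    calc (2:ℝ) • (fv v * fv v)
        = ∑ μ : Fin 4, ∑ ν : Fin 4, (v μ * v ν) • (op μ * op ν + op ν * op μ) := by
          rw [two_smul]
          nth_rewrite 2 [expand']
          rw [expand, ← Finset.sum_add_distrib]
          simp_rw [← Finset.sum_add_distrib, ← smul_add]
      _ = ∑ μ : Fin 4, (v μ * v μ) • ((2 * ee μ) • (1 : Module.End ℝ V)) := by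
          refine Finset.sum_congr rfl fun μ _ => ?_
          rw [Finset.sum_eq_single μ]
          · rw [op_car, if_pos rfl]
          · intro ν _ hν; rw [op_car, if_neg hν.symm, smul_zero]
          · simp
      _ = (2:ℝ) • algebraMap ℝ (Module.End ℝ V) (Q13 v) := by
          rw [Module.algebraMap_end_eq_smul_id]
          simp only [Q13, QuadraticMap.weightedSumSquares_apply]
          rw [Finset.sum_smul, Finset.smul_sum]
          refine Finset.sum_congr rfl fun μ _ => ?_
          simp only [smul_eq_mul, smul_smul]
          rw [show LinearMap.id = (1 : Module.End ℝ V) from rfl]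
          rw [show ((![1, -1, -1, -1] : Fin 4 → ℝ) μ) = ee μ from rfl]
          ring_nf
  have := congrArg (fun z => (2:ℝ)⁻¹ • z) key
  simpa [smul_smul] using this

/-- The Fock representation of the spacetime algebra. -/
noncomputable def ρ : STA →ₐ[ℝ] Module.End ℝ V := CliffordAlgebra.lift Q13 ⟨fv, fv_sq⟩

lemma ρ_ι (m : Fin 4 → ℝ) : ρ (ι Q13 m) = fv m := CliffordAlgebra.lift_ι_apply _ _ _

/-- vacuum vector -/
noncomputable def vac : V := Pi.single ∅ 1

/-- coordinates of a multivector -/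
noncomputable def coords : STA →ₗ[ℝ] V :=
  (LinearMap.applyₗ vac).comp ρ.toLinearMap

lemma coords_apply (x : STA) : coords x = ρ x vac := rfl

lemma coords_ι_mul (m : Fin 4 → ℝ) (x : STA) :
    coords (ι Q13 m * x) = fv m (coords x) := by
  rw [coords_apply, map_mul, ρ_ι]; rfl

end AK

namespace AK

example : Nontrivial STA := inferInstance

lemma Q13_single (μ : Fin 4) : Q13 (Pi.single μ 1) = ee μ := by
  fin_cases μ <;>
    simp [Q13, QuadraticMap.weightedSumSquares_apply, Fin.sum_univ_four, Pi.single_apply, ee] <;>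
    norm_num

lemma γ_mul_self (μ : Fin 4) : γ μ * γ μ = algebraMap ℝ STA (ee μ) := by
  rw [γ, CliffordAlgebra.ι_sq_scalar, Q13_single]

lemma Q13_isOrtho {μ ν : Fin 4} (h : μ ≠ ν) :
    QuadraticMap.IsOrtho Q13 (Pi.single μ 1) (Pi.single ν 1) := by
  rw [QuadraticMap.isOrtho_def]
  fin_cases μ <;> fin_cases ν <;> first
    | exact absurd rfl h
    | (simp [Q13, QuadraticMap.weightedSumSquares_apply, Fin.sum_univ_four, Pi.single_apply] <;>
        norm_num)

lemma γ_anticomm {μ ν : Fin 4} (h : μ ≠ ν) : γ μ * γ ν = -(γ ν * γ μ) := by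
  have := CliffordAlgebra.ι_mul_ι_add_swap_of_isOrtho (Q13_isOrtho h)
  exact eq_neg_of_add_eq_zero_left this

/-- ordered products of γ's -/
noncomputable def G (L : List (Fin 4)) : STA := (L.map γ).prod

@[simp] lemma G_nil : G [] = 1 := rfl

@[simp] lemma G_cons (μ : Fin 4) (L : List (Fin 4)) : G (μ :: L) = γ μ * G L := by
  rw [G, G, List.map_cons, List.prod_cons]

/-- the list-level sign -/
noncomputable def sg (μ : Fin 4) (L : List (Fin 4)) : ℝ := (-1) ^ (L.filter (· < μ)).length

lemma gamma_mul_G {μ : Fin 4} : ∀ (L : List (Fin 4)), L.Pairwise (· < ·) → μ ∉ L →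
    γ μ * G L = sg μ L • G (L.orderedInsert (· ≤ ·) μ) := by
  intro L
  induction L with
  | nil => intro _ _; simp [sg, List.orderedInsert]
  | cons ν L ih =>
    intro hL hμ
    have hμL : μ ∉ L := fun hc => hμ (List.mem_cons_of_mem ν hc)
    have hμν : μ ≠ ν := fun hc => hμ (hc ▸ List.mem_cons_self (a := μ) (l := L))
    rcases hμν.lt_or_gt with h | h
    · have hins : (ν :: L).orderedInsert (· ≤ ·) μ = μ :: ν :: L := by
        rw [List.orderedInsert, if_pos (le_of_lt h)]
      have hfil : (ν :: L).filter (· < μ) = [] := by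
        rw [List.filter_eq_nil_iff]
        intro b hb
        have : ν ≤ b := by
          rcases hb with _ | hb
          · exact le_refl _
          · exact le_of_lt (List.rel_of_pairwise_cons hL (by assumption))
        simp only [decide_eq_true_eq]
        exact not_lt.2 (le_trans (le_of_lt h) this)
      rw [hins, sg, hfil, List.length_nil, pow_zero, one_smul, G_cons, G_cons, G_cons]
    · have hins : (ν :: L).orderedInsert (· ≤ ·) μ = ν :: L.orderedInsert (· ≤ ·) μ := by
        rw [List.orderedInsert, if_neg (not_le.2 h)]
      have hfil : ((ν :: L).filter (· < μ)).length = ((L.filter (· < μ)).length) + 1 := by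
        rw [List.filter_cons, if_pos (by simpa using h), List.length_cons]
      rw [G_cons, ← mul_assoc, γ_anticomm hμν, neg_mul, mul_assoc,
        ih (List.Pairwise.of_cons hL) hμL, hins, G_cons, mul_smul_comm, ← neg_smul, sg, sg, hfil,
        pow_succ]
      congr 1
      ring


end AK

namespace AK

/-- products over sorted finsets -/
noncomputable def GS (S : Finset (Fin 4)) : STA := G (S.sort (· ≤ ·))

@[simp] lemma GS_empty : GS ∅ = 1 := by rw [GS, Finset.sort_empty, G_nil]

lemma filter_sort_length (p : Fin 4 → Prop) [DecidablePred p] (S : Finset (Fin 4)) :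
    ((S.sort (· ≤ ·)).filter (fun x => decide (p x))).length = (S.filter p).card := by
  classical
  have h1 : ((S.sort (· ≤ ·)).filter (fun x => decide (p x)) : Multiset (Fin 4))
      = Multiset.filter p ↑(S.sort (· ≤ ·)) := by
    rw [Multiset.filter_coe]
  have h2 : (↑(S.sort (· ≤ ·)) : Multiset (Fin 4)) = S.1 := Finset.sort_eq S _
  calc ((S.sort (· ≤ ·)).filter (fun x => decide (p x))).length
      = Multiset.card ((S.sort (· ≤ ·)).filter (fun x => decide (p x)) : Multiset (Fin 4)) := by
        rw [Multiset.coe_card]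
    _ = Multiset.card (Multiset.filter p S.1) := by rw [h1, h2]
    _ = (S.filter p).card := by rw [Finset.card_def, Finset.filter_val]

lemma sg_sort (μ : Fin 4) (S : Finset (Fin 4)) : sg μ (S.sort (· ≤ ·)) = sgn μ S := by
  rw [sg, sgn, filter_sort_length (· < μ)]

lemma sort_insert {μ : Fin 4} {S : Finset (Fin 4)} (h : μ ∉ S) :
    (insert μ S).sort (· ≤ ·) = (S.sort (· ≤ ·)).orderedInsert (· ≤ ·) μ := by
  refine List.Perm.eq_of_pairwise' (Finset.pairwise_sort _ _)
    (List.Pairwise.orderedInsert μ _ (Finset.pairwise_sort _ _)) ?_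
  exact (Finset.sort_perm_toList _ _).trans ((Finset.toList_insert h).trans
    (((Finset.sort_perm_toList S (· ≤ ·)).symm.cons μ).trans
      (List.perm_orderedInsert _ μ _).symm))

lemma γ_mul_GS_not_mem {μ : Fin 4} {S : Finset (Fin 4)} (h : μ ∉ S) :
    γ μ * GS S = sgn μ S • GS (insert μ S) := by
  rw [GS, GS, sort_insert h, ← sg_sort,
    gamma_mul_G _ (Finset.sortedLT_sort S).pairwise (fun hc => h ((Finset.mem_sort _).1 hc))]

lemma γ_mul_GS_mem {μ : Fin 4} {S : Finset (Fin 4)} (h : μ ∈ S) :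
    γ μ * GS S = (ee μ * sgn μ S) • GS (S.erase μ) := by
  have h' : μ ∉ S.erase μ := Finset.notMem_erase μ S
  have key := γ_mul_GS_not_mem h'
  rw [Finset.insert_erase h] at key
  have := congrArg (fun z => γ μ * z) key
  simp only [mul_smul_comm, ← mul_assoc, γ_mul_self] at this
  rw [← Algebra.smul_def] at this
  have := congrArg (fun z => sgn μ (S.erase μ) • z) this
  simp only [smul_smul, sgn_mul_self, one_smul] at this
  rw [← this, sgn_erase_self, mul_comm]

/-- commutation of γ μ past GS S -/
lemma G_comm (μ : Fin 4) : ∀ (L : List (Fin 4)), L.Nodup →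
    G L * γ μ = ((-1 : ℝ) ^ (L.filter (· ≠ μ)).length) • (γ μ * G L) := by
  intro L
  induction L with
  | nil => simp
  | cons ν L ih =>
    intro hnd
    rcases eq_or_ne ν μ with hh | hνμ
    · subst hh
      have hνL : ν ∉ L := (List.nodup_cons.1 hnd).1
      have hfil : (ν :: L).filter (· ≠ ν) = L.filter (· ≠ ν) := by
        rw [List.filter_cons, if_neg (by simp)]
      rw [G_cons, mul_assoc, ih (List.nodup_cons.1 hnd).2, hfil, mul_smul_comm]
    · have hfil : ((ν :: L).filter (· ≠ μ)).length = (L.filter (· ≠ μ)).length + 1 := by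
        rw [List.filter_cons, if_pos (by simpa using hνμ), List.length_cons]
      rw [G_cons, mul_assoc, ih (List.nodup_cons.1 hnd).2, mul_smul_comm, ← mul_assoc,
        γ_anticomm hνμ, hfil, pow_succ]
      rw [neg_mul, mul_assoc, ← G_cons, smul_neg, ← neg_smul]
      congr 1
      ring

lemma GS_comm (μ : Fin 4) (S : Finset (Fin 4)) :
    GS S * γ μ = ((-1 : ℝ) ^ ((S.filter (· ≠ μ)).card)) • (γ μ * GS S) := by
  rw [GS, G_comm μ _ (Finset.sort_nodup S _), filter_sort_length (· ≠ μ)]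

end AK

namespace AK


lemma op_single_not_mem {μ : Fin 4} {S : Finset (Fin 4)} (h : μ ∉ S) :
    op μ ((Pi.single S 1 : V)) = sgn μ S • (Pi.single (insert μ S) 1 : V) := by
  funext T
  rw [op_apply, Pi.smul_apply]
  by_cases hT : μ ∈ T
  · rw [if_pos hT]
    by_cases hTS : T = insert μ S
    · subst hTS
      rw [Finset.erase_insert h, Pi.single_eq_same, Pi.single_eq_same, mul_one, smul_eq_mul,
        mul_one, ← sgn_erase_self μ (insert μ S), Finset.erase_insert h]
    · have h1 : T.erase μ ≠ S := fun hc => hTS (by rw [← hc, Finset.insert_erase hT])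
      rw [Pi.single_eq_of_ne h1, Pi.single_eq_of_ne hTS, mul_zero, smul_zero]
  · rw [if_neg hT]
    have h1 : insert μ T ≠ S := fun hc => h (hc ▸ Finset.mem_insert_self μ T)
    have h2 : T ≠ insert μ S := fun hc => hT (hc ▸ Finset.mem_insert_self μ S)
    rw [Pi.single_eq_of_ne h1, Pi.single_eq_of_ne h2, mul_zero, mul_zero, smul_zero]

lemma op_single_mem {μ : Fin 4} {S : Finset (Fin 4)} (h : μ ∈ S) :
    op μ ((Pi.single S 1 : V)) = (ee μ * sgn μ S) • (Pi.single (S.erase μ) 1 : V) := by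
  funext T
  rw [op_apply, Pi.smul_apply]
  by_cases hT : μ ∈ T
  · rw [if_pos hT]
    have h1 : T.erase μ ≠ S := fun hc => (hc ▸ Finset.notMem_erase μ T) h
    have h2 : T ≠ S.erase μ := fun hc => Finset.notMem_erase μ S (hc ▸ hT)
    rw [Pi.single_eq_of_ne h1, Pi.single_eq_of_ne h2, mul_zero, smul_zero]
  · rw [if_neg hT]
    by_cases hTS : T = S.erase μ
    · subst hTS
      rw [Finset.insert_erase h, Pi.single_eq_same, Pi.single_eq_same, smul_eq_mul, mul_one,
        mul_one, ← sgn_erase_self μ S]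
    · have h1 : insert μ T ≠ S := fun hc => hTS (by rw [← hc, Finset.erase_insert hT])
      rw [Pi.single_eq_of_ne h1, Pi.single_eq_of_ne hTS, mul_zero, mul_zero, smul_zero]

noncomputable def back : V →ₗ[ℝ] STA :=
  ∑ S : Finset (Fin 4), (LinearMap.proj S).smulRight (GS S)

lemma back_apply (c : V) : back c = ∑ S : Finset (Fin 4), c S • GS S := by
  simp [back, LinearMap.smulRight_apply]

lemma back_single (S : Finset (Fin 4)) : back ((Pi.single S 1 : V)) = GS S := by
  rw [back_apply, Finset.sum_eq_single S]
  · rw [Pi.single_eq_same, one_smul]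
  · intro T _ hTS; rw [Pi.single_eq_of_ne hTS, zero_smul]
  · simp

lemma single_eq_smul {ι : Type*} [DecidableEq ι] (c : ι → ℝ) (i : ι) :
    Pi.single i (c i) = c i • (Pi.single i 1 : ι → ℝ) := by
  rw [← Pi.single_smul, smul_eq_mul, mul_one]

lemma back_op (μ : Fin 4) (c : V) : back (op μ c) = γ μ * back c := by
  have hsingle : ∀ S : Finset (Fin 4),
      back (op μ ((Pi.single S 1 : V))) = γ μ * back ((Pi.single S 1 : V)) := by
    intro S
    by_cases h : μ ∈ S
    · rw [op_single_mem h, map_smul, back_single, back_single, γ_mul_GS_mem h]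
    · rw [op_single_not_mem h, map_smul, back_single, back_single, γ_mul_GS_not_mem h]
  conv_lhs => rw [← Finset.univ_sum_single c]
  conv_rhs => rw [← Finset.univ_sum_single c]
  rw [map_sum, map_sum, map_sum, Finset.mul_sum]
  refine Finset.sum_congr rfl fun S _ => ?_
  rw [single_eq_smul c S, map_smul, map_smul, hsingle, map_smul, mul_smul_comm]

lemma back_fv (m : Fin 4 → ℝ) (c : V) : back (fv m c) = ι Q13 m * back c := by
  have hι : ι Q13 m = ∑ μ : Fin 4, m μ • γ μ := by
    conv_lhs => rw [← Finset.univ_sum_single m]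
    rw [map_sum]
    refine Finset.sum_congr rfl fun μ _ => ?_
    rw [single_eq_smul m μ, map_smul, γ]
  rw [fv_apply, LinearMap.sum_apply, map_sum, hι, Finset.sum_mul]
  refine Finset.sum_congr rfl fun μ _ => ?_
  rw [LinearMap.smul_apply, map_smul, back_op, smul_mul_assoc]

lemma back_coords (x : STA) : back (coords x) = x := by
  induction x using CliffordAlgebra.left_induction with
  | algebraMap r =>
    rw [coords_apply, AlgHom.commutes, Module.algebraMap_end_eq_smul_id,
      LinearMap.smul_apply, LinearMap.id_apply, map_smul]
    rw [show vac = (Pi.single ∅ 1 : V) from rfl, back_single, GS_empty,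
      Algebra.algebraMap_eq_smul_one]
  | add x y hx hy => rw [map_add, map_add, hx, hy]
  | ι_mul x m hx => rw [coords_ι_mul, back_fv, hx]

lemma coords_G_sorted : ∀ L : List (Fin 4), L.Pairwise (· < ·) →
    ρ (G L) vac = (Pi.single L.toFinset 1 : V) := by
  intro L
  induction L with
  | nil =>
    intro _
    rw [G_nil, map_one, Module.End.one_apply]
    rfl
  | cons μ L ih =>
    intro hL
    have hrel : ∀ b ∈ L, μ < b := fun b hb => List.rel_of_pairwise_cons hL hb
    have hμ : μ ∉ L.toFinset := by
      rw [List.mem_toFinset]; exact fun hc => lt_irrefl μ (hrel μ hc)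
    have hsgn : sgn μ L.toFinset = 1 := by
      rw [sgn, Finset.filter_eq_empty_iff.2 ?_, Finset.card_empty, pow_zero]
      intro b hb
      exact not_lt.2 (le_of_lt (hrel b (List.mem_toFinset.1 hb)))
    rw [G_cons, map_mul, Module.End.mul_apply, ih (List.Pairwise.of_cons hL), γ, ρ_ι, fv_single,
      op_single_not_mem hμ, hsgn, one_smul, List.toFinset_cons]

lemma coords_GS (S : Finset (Fin 4)) : coords (GS S) = (Pi.single S 1 : V) := by
  rw [coords_apply, GS, coords_G_sorted _ (Finset.sortedLT_sort S).pairwise, Finset.sort_toFinset]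

lemma coords_back (c : V) : coords (back c) = c := by
  rw [back_apply, map_sum]
  simp_rw [map_smul, coords_GS]
  conv_rhs => rw [← Finset.univ_sum_single c]
  exact Finset.sum_congr rfl fun S _ => (single_eq_smul c S).symm




end AK

open AK in
/-- The kernel of the adjoint representation of the spin group is ℤ₂. -/
theorem adjoint_kernel (u : STA) (hu : u ∈ CliffordAlgebra.even Q13)
    (huu : u * reverse (Q := Q13) u = 1)
    (hcomm : ∀ v : Fin 4 → ℝ, u * ι Q13 v = ι Q13 v * u) :
    u = 1 ∨ u = -1 := by
  classical
  set c : V := coords u with hc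
  have hu1 : back c = u := back_coords u
  have hkey : ∀ S₀ : Finset (Fin 4), S₀ ≠ ∅ → c S₀ = 0 := by
    intro S₀ hS₀
    obtain ⟨μ, hodd⟩ : ∃ μ : Fin 4, Odd (S₀.filter (· ≠ μ)).card := by
      by_cases hpar : Even S₀.card
      · obtain ⟨μ, hμ⟩ := Finset.nonempty_iff_ne_empty.2 hS₀
        refine ⟨μ, ?_⟩
        rw [Finset.filter_ne', Finset.card_erase_of_mem hμ]
        exact Nat.Even.sub_odd (Finset.card_pos.2 ⟨μ, hμ⟩) hpar odd_one
      · have hne : S₀ ≠ Finset.univ := by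
          intro h
          rw [h, Finset.card_univ, Fintype.card_fin] at hpar
          exact hpar (by decide)
        obtain ⟨μ, hμ⟩ : ∃ μ, μ ∉ S₀ := by
          by_contra hall
          push_neg at hall
          exact hne (Finset.eq_univ_iff_forall.2 hall)
        refine ⟨μ, ?_⟩
        have hfeq : Finset.filter (fun x => x ≠ μ) S₀ = S₀ :=
          Finset.filter_true_of_mem (fun x hx hxμ => hμ (hxμ ▸ hx))
        rw [hfeq]
        exact Nat.not_even_iff_odd.1 hpar
    have hswap : u * γ μ = γ μ * u := by rw [γ]; exact hcomm _
    have hcom : γ μ * u * γ μ = ee μ • u := by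
      rw [← hswap, mul_assoc, γ_mul_self, ← Algebra.commutes, ← Algebra.smul_def]
    have hexp : γ μ * u * γ μ
        = ee μ • back (fun S => (-1:ℝ) ^ ((S.filter (· ≠ μ)).card) * c S) := by
      conv_lhs => rw [← hu1, back_apply]
      rw [Finset.mul_sum, Finset.sum_mul, back_apply, Finset.smul_sum]
      refine Finset.sum_congr rfl fun S _ => ?_
      rw [mul_smul_comm, smul_mul_assoc, mul_assoc, GS_comm, mul_smul_comm, ← mul_assoc,
        γ_mul_self, ← Algebra.smul_def, smul_smul, smul_smul, smul_smul]
      congr 1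
      ring
    have hub' : u = back (fun S => (-1:ℝ) ^ ((S.filter (· ≠ μ)).card) * c S) := by
      have h2 := congrArg (fun z => ee μ • z) (hcom.symm.trans hexp)
      simpa [smul_smul, ee_mul_self, one_smul] using h2
    have hcc := congrArg coords (hu1.trans hub')
    rw [coords_back, coords_back] at hcc
    have hS := congrFun hcc S₀
    rw [Odd.neg_one_pow hodd] at hS
    linarith
  have hcval : c = Pi.single ∅ (c ∅) := by
    funext S
    by_cases h : S = ∅
    · subst h; rw [Pi.single_eq_same]
    · rw [Pi.single_eq_of_ne h, hkey S h]
  have hu2 : u = algebraMap ℝ STA (c ∅) := by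
    rw [← hu1]
    conv_lhs => rw [hcval, single_eq_smul c ∅]
    rw [map_smul, back_single, GS_empty, Algebra.algebraMap_eq_smul_one]
  have hr : (c ∅) * (c ∅) = 1 := by
    have h1 := huu
    rw [hu2, CliffordAlgebra.reverse.commutes, ← map_mul] at h1
    exact (RingHom.injective (algebraMap ℝ STA)) (h1.trans (map_one (algebraMap ℝ STA)).symm)
  rcases mul_self_eq_one_iff.1 hr with h1 | h1
  · left; rw [hu2, h1, map_one]
  · right; rw [hu2, h1, map_neg, map_one]
end

section
/- (The even subalgebra of the spacetime algebra is the Pauli algebra.) The even subalgebra Cℓ⁰(1,3) of the real Clifford algebra Cℓ(1,3) of Minkowski signature (1,3) is isomorphic as an ℝ-algebra to the real Clifford algebra Cℓ(3,0) of the positive-definite quadratic form on ℝ³ (the Pauli algebra); equivalently, Cℓ⁰(1,3) ≃ₐ[ℝ] Matrix (Fin 2) (Fin 2) ℂ. -/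
noncomputable def Q30 : QuadraticForm ℝ (Fin 3 → ℝ) :=
  QuadraticMap.weightedSumSquares ℝ ![(1 : ℝ), 1, 1]

open CliffordAlgebra Matrix


section EvenIso

variable {M₁ M₂ : Type*} [AddCommGroup M₁] [AddCommGroup M₂] [Module ℝ M₁] [Module ℝ M₂]
  {Q₁ : QuadraticForm ℝ M₁} {Q₂ : QuadraticForm ℝ M₂}

/-- Transport an `EvenHom` along an isometry equivalence. -/
noncomputable def evenHomOfIsometry (e : Q₁.IsometryEquiv Q₂) :
    CliffordAlgebra.EvenHom Q₁ (CliffordAlgebra.even Q₂) where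
  bilin := (even.ι Q₂).bilin.compl₁₂ e.toLinearEquiv.toLinearMap e.toLinearEquiv.toLinearMap
  contract m := e.map_app m ▸ (even.ι Q₂).contract (e m)
  contract_mid m₁ m₂ m₃ := e.map_app m₂ ▸ (even.ι Q₂).contract_mid (e m₁) (e m₂) (e m₃)

theorem evenHomOfIsometry_bilin (e : Q₁.IsometryEquiv Q₂) (m₁ m₂ : M₁) :
    (evenHomOfIsometry e).bilin m₁ m₂ = (even.ι Q₂).bilin (e m₁) (e m₂) := rfl

/-- The even subalgebras of Clifford algebras of isometric quadratic forms are isomorphic. -/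
noncomputable def evenEquivOfIsometry (e : Q₁.IsometryEquiv Q₂) :
    CliffordAlgebra.even Q₁ ≃ₐ[ℝ] CliffordAlgebra.even Q₂ :=
  AlgEquiv.ofAlgHom (even.lift Q₁ (evenHomOfIsometry e))
    (even.lift Q₂ (evenHomOfIsometry e.symm))
    (even.algHom_ext Q₂ <| CliffordAlgebra.EvenHom.ext <| LinearMap.ext₂ fun m₁ m₂ => by
      simp only [EvenHom.compr₂_bilin, LinearMap.compr₂_apply, AlgHom.toLinearMap_apply,
        AlgHom.comp_apply, AlgHom.coe_id, id_eq]
      rw [even.lift_ι, evenHomOfIsometry_bilin, even.lift_ι, evenHomOfIsometry_bilin]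
      rw [show e (e.symm m₁) = m₁ from e.toLinearEquiv.apply_symm_apply m₁,
        show e (e.symm m₂) = m₂ from e.toLinearEquiv.apply_symm_apply m₂])
    (even.algHom_ext Q₁ <| CliffordAlgebra.EvenHom.ext <| LinearMap.ext₂ fun m₁ m₂ => by
      simp only [EvenHom.compr₂_bilin, LinearMap.compr₂_apply, AlgHom.toLinearMap_apply,
        AlgHom.comp_apply, AlgHom.coe_id, id_eq]
      rw [even.lift_ι, evenHomOfIsometry_bilin, even.lift_ι, evenHomOfIsometry_bilin]
      rw [show e.symm (e m₁) = m₁ from e.toLinearEquiv.symm_apply_apply m₁,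
        show e.symm (e m₂) = m₂ from e.toLinearEquiv.symm_apply_apply m₂])

end EvenIso

/-- The reindexing linear equivalence `(Fin 4 → ℝ) ≃ₗ (Fin 3 → ℝ) × ℝ`. -/
noncomputable def splitLE : (Fin 4 → ℝ) ≃ₗ[ℝ] (Fin 3 → ℝ) × ℝ where
  toFun x := (Fin.tail x, x 0)
  invFun p := Fin.cons p.2 p.1
  map_add' x y := rfl
  map_smul' c x := rfl
  left_inv x := Fin.cons_self_tail x
  right_inv p := by simp [Fin.tail_cons]

/-- `-Q13` is isometric to the one-up form of `Q30`. -/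
noncomputable def isoNegQ13 : (-Q13).IsometryEquiv (CliffordAlgebra.EquivEven.Q' Q30) where
  toLinearEquiv := splitLE
  map_app' x := by
    simp only [splitLE, LinearEquiv.coe_mk, CliffordAlgebra.EquivEven.Q'_apply,
      QuadraticMap.neg_apply, Q13, Q30, QuadraticMap.weightedSumSquares_apply,
      Fin.sum_univ_three, Fin.sum_univ_four, Fin.tail]
    simp [Matrix.cons_val_zero, Matrix.cons_val_one]
    ring

/-- `even Q13 ≃ Cl(Q30)`. -/
noncomputable def equivSTA : CliffordAlgebra.even Q13 ≃ₐ[ℝ] CliffordAlgebra Q30 :=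
  ((CliffordAlgebra.evenEquivEvenNeg Q13).trans (evenEquivOfIsometry isoNegQ13)).trans
    (CliffordAlgebra.equivEven Q30).symm


/-- The Pauli matrices. -/
noncomputable def pauli : Fin 3 → Matrix (Fin 2) (Fin 2) ℂ :=
  ![!![0, 1; 1, 0], !![0, -Complex.I; Complex.I, 0], !![1, 0; 0, -1]]

/-- The linear map sending a vector to its Pauli matrix. -/
noncomputable def pauliMap : (Fin 3 → ℝ) →ₗ[ℝ] Matrix (Fin 2) (Fin 2) ℂ where
  toFun x := x 0 • pauli 0 + x 1 • pauli 1 + x 2 • pauli 2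
  map_add' x y := by simp only [Pi.add_apply, add_smul]; abel
  map_smul' c x := by simp only [Pi.smul_apply, smul_eq_mul, RingHom.id_apply, smul_add,
    smul_smul]

theorem pauliMap_sq (x : Fin 3 → ℝ) :
    pauliMap x * pauliMap x = algebraMap ℝ (Matrix (Fin 2) (Fin 2) ℂ) (Q30 x) := by
  have hQ : Q30 x = x 0 * x 0 + x 1 * x 1 + x 2 * x 2 := by
    simp [Q30, QuadraticMap.weightedSumSquares_apply, Fin.sum_univ_three]
  rw [hQ]
  ext i j
  fin_cases i <;> fin_cases j <;>
    simp [pauliMap, pauli, Matrix.mul_apply, Fin.sum_univ_two, Matrix.algebraMap_matrix_apply,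
      Complex.ext_iff] <;> first | (refine ⟨by ring, by ring⟩) | ring

/-- The algebra map `Cl(3,0) → M₂(ℂ)`. -/
noncomputable def toPauli : CliffordAlgebra Q30 →ₐ[ℝ] Matrix (Fin 2) (Fin 2) ℂ :=
  CliffordAlgebra.lift Q30 ⟨pauliMap, pauliMap_sq⟩

/-- Clifford generators. -/
noncomputable def eg (i : Fin 3) : CliffordAlgebra Q30 := ι Q30 (Pi.single i 1)

theorem toPauli_eg (i : Fin 3) : toPauli (eg i) = pauli i := by
  rw [toPauli, eg, CliffordAlgebra.lift_ι_apply]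
  fin_cases i <;>
    simp [pauliMap, Pi.single_apply]

theorem Q30_single (i : Fin 3) : Q30 (Pi.single i 1) = 1 := by
  fin_cases i <;>
    simp [Q30, QuadraticMap.weightedSumSquares_apply, Fin.sum_univ_three, Pi.single_apply]

theorem eg_sq (i : Fin 3) : eg i * eg i = 1 := by
  rw [eg, CliffordAlgebra.ι_sq_scalar, Q30_single, _root_.map_one]

theorem eg_ortho {i j : Fin 3} (h : i ≠ j) : Q30.IsOrtho (Pi.single i 1) (Pi.single j 1) := by
  fin_cases i <;> fin_cases j <;> simp_all <;>
    simp [QuadraticMap.IsOrtho, Q30, QuadraticMap.weightedSumSquares_apply, Fin.sum_univ_three,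
      Pi.single_apply]

theorem eg_swap {i j : Fin 3} (h : i ≠ j) : eg i * eg j = -(eg j * eg i) :=
  CliffordAlgebra.ι_mul_ι_comm_of_isOrtho (eg_ortho h)

/-- A spanning family for `Cl(3,0)`. -/
noncomputable def clB : Fin 8 → CliffordAlgebra Q30 :=
  ![1, eg 0, eg 1, eg 2, eg 0 * eg 1, eg 0 * eg 2, eg 1 * eg 2, eg 0 * (eg 1 * eg 2)]

/-- The span of the 8 basis products. -/
noncomputable def TT : Submodule ℝ (CliffordAlgebra Q30) := Submodule.span ℝ (Set.range clB)

theorem clB_mem (k : Fin 8) : clB k ∈ TT := Submodule.subset_span ⟨k, rfl⟩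

theorem eg_mul_clB (i : Fin 3) (k : Fin 8) : eg i * clB k ∈ TT := by
  have h10 : eg 1 * eg 0 = -(eg 0 * eg 1) := eg_swap (by decide)
  have h20 : eg 2 * eg 0 = -(eg 0 * eg 2) := eg_swap (by decide)
  have h21 : eg 2 * eg 1 = -(eg 1 * eg 2) := eg_swap (by decide)
  have h11 : eg 1 * (eg 1 * eg 2) = eg 2 := by rw [← mul_assoc, eg_sq, one_mul]
  fin_cases i <;> fin_cases k
  · show eg 0 * 1 ∈ TT; rw [mul_one]; exact clB_mem 1
  · show eg 0 * eg 0 ∈ TT; rw [eg_sq]; exact clB_mem 0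
  · exact clB_mem 4
  · exact clB_mem 5
  · show eg 0 * (eg 0 * eg 1) ∈ TT
    rw [← mul_assoc, eg_sq, one_mul]; exact clB_mem 2
  · show eg 0 * (eg 0 * eg 2) ∈ TT
    rw [← mul_assoc, eg_sq, one_mul]; exact clB_mem 3
  · exact clB_mem 7
  · show eg 0 * (eg 0 * (eg 1 * eg 2)) ∈ TT
    rw [← mul_assoc, eg_sq, one_mul]; exact clB_mem 6
  · show eg 1 * 1 ∈ TT; rw [mul_one]; exact clB_mem 2
  · show eg 1 * eg 0 ∈ TT; rw [h10]; exact neg_mem (clB_mem 4)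
  · show eg 1 * eg 1 ∈ TT; rw [eg_sq]; exact clB_mem 0
  · exact clB_mem 6
  · show eg 1 * (eg 0 * eg 1) ∈ TT
    rw [← mul_assoc, h10, neg_mul, mul_assoc, eg_sq, mul_one]; exact neg_mem (clB_mem 1)
  · show eg 1 * (eg 0 * eg 2) ∈ TT
    rw [← mul_assoc, h10, neg_mul, mul_assoc]; exact neg_mem (clB_mem 7)
  · show eg 1 * (eg 1 * eg 2) ∈ TT
    rw [h11]; exact clB_mem 3
  · show eg 1 * (eg 0 * (eg 1 * eg 2)) ∈ TT
    rw [← mul_assoc, h10, neg_mul, mul_assoc, h11]; exact neg_mem (clB_mem 5)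
  · show eg 2 * 1 ∈ TT; rw [mul_one]; exact clB_mem 3
  · show eg 2 * eg 0 ∈ TT; rw [h20]; exact neg_mem (clB_mem 5)
  · show eg 2 * eg 1 ∈ TT; rw [h21]; exact neg_mem (clB_mem 6)
  · show eg 2 * eg 2 ∈ TT; rw [eg_sq]; exact clB_mem 0
  · show eg 2 * (eg 0 * eg 1) ∈ TT
    rw [← mul_assoc, h20, neg_mul, mul_assoc, h21, mul_neg, neg_neg]; exact clB_mem 7
  · show eg 2 * (eg 0 * eg 2) ∈ TT
    rw [← mul_assoc, h20, neg_mul, mul_assoc, eg_sq, mul_one]; exact neg_mem (clB_mem 1)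
  · show eg 2 * (eg 1 * eg 2) ∈ TT
    rw [← mul_assoc, h21, neg_mul, mul_assoc, eg_sq, mul_one]; exact neg_mem (clB_mem 2)
  · show eg 2 * (eg 0 * (eg 1 * eg 2)) ∈ TT
    rw [← mul_assoc, h20, neg_mul, mul_assoc, ← mul_assoc (eg 2), h21, neg_mul, mul_assoc,
      eg_sq, mul_one, mul_neg, neg_neg]
    exact clB_mem 4

theorem ι_decomp (v : Fin 3 → ℝ) : ι Q30 v = v 0 • eg 0 + v 1 • eg 1 + v 2 • eg 2 := by
  have hv : v = v 0 • (Pi.single 0 1 : Fin 3 → ℝ) + v 1 • (Pi.single 1 1 : Fin 3 → ℝ)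
      + v 2 • (Pi.single 2 1 : Fin 3 → ℝ) := by
    funext j; fin_cases j <;> simp [Pi.single_apply]
  conv_lhs => rw [hv]
  simp only [map_add, _root_.map_smul, eg]

theorem eg_mul_mem (i : Fin 3) {y : CliffordAlgebra Q30} (hy : y ∈ TT) : eg i * y ∈ TT := by
  induction hy using Submodule.span_induction with
  | mem y h => obtain ⟨k, rfl⟩ := h; exact eg_mul_clB i k
  | zero => rw [mul_zero]; exact TT.zero_mem
  | add a b _ _ ha hb => rw [mul_add]; exact add_mem ha hb
  | smul c a _ ha => rw [mul_smul_comm]; exact TT.smul_mem c ha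

theorem mem_TT (x : CliffordAlgebra Q30) : x ∈ TT := by
  have key : ∀ x : CliffordAlgebra Q30, x ∈ TT ∧ ∀ y ∈ TT, x * y ∈ TT := by
    intro x
    induction x using CliffordAlgebra.induction with
    | algebraMap r =>
      refine ⟨?_, fun y hy => ?_⟩
      · rw [Algebra.algebraMap_eq_smul_one]; exact TT.smul_mem r (clB_mem 0)
      · rw [← Algebra.smul_def]; exact TT.smul_mem r hy
    | ι v =>
      have hmul : ∀ y ∈ TT, ι Q30 v * y ∈ TT := fun y hy => by
        rw [ι_decomp, add_mul, add_mul, smul_mul_assoc, smul_mul_assoc, smul_mul_assoc]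
        exact add_mem (add_mem (TT.smul_mem _ (eg_mul_mem 0 hy)) (TT.smul_mem _ (eg_mul_mem 1 hy)))
          (TT.smul_mem _ (eg_mul_mem 2 hy))
      refine ⟨?_, hmul⟩
      rw [ι_decomp]
      exact add_mem (add_mem (TT.smul_mem _ (clB_mem 1)) (TT.smul_mem _ (clB_mem 2)))
        (TT.smul_mem _ (clB_mem 3))
    | mul a b ha hb =>
      exact ⟨ha.2 b hb.1, fun y hy => by rw [mul_assoc]; exact ha.2 _ (hb.2 y hy)⟩
    | add a b ha hb =>
      exact ⟨add_mem ha.1 hb.1, fun y hy => by rw [add_mul]; exact add_mem (ha.2 y hy) (hb.2 y hy)⟩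
  exact (key x).1

theorem TT_eq_top : TT = ⊤ := eq_top_iff.2 fun x _ => mem_TT x

instance : Module.Finite ℝ (CliffordAlgebra Q30) :=
  ⟨by rw [← TT_eq_top]; exact Submodule.fg_span (Set.finite_range clB)⟩

theorem finrank_le : Module.finrank ℝ (CliffordAlgebra Q30) ≤ 8 := by
  simpa using finrank_le_of_span_eq_top (v := clB) TT_eq_top

theorem pauli_mem_range (i : Fin 3) : pauli i ∈ toPauli.range := ⟨eg i, toPauli_eg i⟩

theorem matrix_decomp (m : Matrix (Fin 2) (Fin 2) ℂ) :
    m = (((m 0 0).re + (m 1 1).re) / 2) • (1 : Matrix (Fin 2) (Fin 2) ℂ)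
      + (((m 0 1).re + (m 1 0).re) / 2) • pauli 0
      + (((m 1 0).im - (m 0 1).im) / 2) • pauli 1
      + (((m 0 0).re - (m 1 1).re) / 2) • pauli 2
      + (((m 0 0).im - (m 1 1).im) / 2) • (pauli 0 * pauli 1)
      + (((m 1 0).re - (m 0 1).re) / 2) • (pauli 0 * pauli 2)
      + (((m 0 1).im + (m 1 0).im) / 2) • (pauli 1 * pauli 2)
      + (((m 0 0).im + (m 1 1).im) / 2) • (pauli 0 * (pauli 1 * pauli 2)) := by
  ext i j
  fin_cases i <;> fin_cases j <;>
    simp [pauli, Matrix.mul_apply, Fin.sum_univ_two, Matrix.one_apply, Complex.ext_iff] <;>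
    first | (refine ⟨by ring, by ring⟩) | ring

theorem toPauli_surjective : Function.Surjective toPauli := by
  intro m
  have hmem : m ∈ toPauli.range := by
    rw [matrix_decomp m]
    have h1 : (1 : Matrix (Fin 2) (Fin 2) ℂ) ∈ toPauli.range := one_mem _
    have h := pauli_mem_range
    exact add_mem (add_mem (add_mem (add_mem (add_mem (add_mem (add_mem
      (SMulMemClass.smul_mem _ h1) (SMulMemClass.smul_mem _ (h 0)))
      (SMulMemClass.smul_mem _ (h 1))) (SMulMemClass.smul_mem _ (h 2)))
      (SMulMemClass.smul_mem _ (mul_mem (h 0) (h 1))))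
      (SMulMemClass.smul_mem _ (mul_mem (h 0) (h 2))))
      (SMulMemClass.smul_mem _ (mul_mem (h 1) (h 2))))
      (SMulMemClass.smul_mem _ (mul_mem (h 0) (mul_mem (h 1) (h 2))))
  exact hmem

theorem finrank_M2C : Module.finrank ℝ (Matrix (Fin 2) (Fin 2) ℂ) = 8 := by
  rw [Module.finrank_matrix]
  simp [Complex.finrank_real_complex]

theorem finrank_eq : Module.finrank ℝ (CliffordAlgebra Q30)
    = Module.finrank ℝ (Matrix (Fin 2) (Fin 2) ℂ) := by
  refine le_antisymm (finrank_le.trans_eq finrank_M2C.symm) ?_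
  have := toPauli.toLinearMap.finrank_range_le
  rwa [LinearMap.range_eq_top.2 (show Function.Surjective toPauli.toLinearMap from
    toPauli_surjective), finrank_top] at this

theorem toPauli_injective : Function.Injective toPauli :=
  (LinearMap.injective_iff_surjective_of_finrank_eq_finrank
    (f := toPauli.toLinearMap) finrank_eq).2 toPauli_surjective

/-- `Cl(3,0) ≃ M₂(ℂ)`. -/
noncomputable def pauliEquiv : CliffordAlgebra Q30 ≃ₐ[ℝ] Matrix (Fin 2) (Fin 2) ℂ :=
  AlgEquiv.ofBijective toPauli ⟨toPauli_injective, toPauli_surjective⟩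

/-- The even subalgebra of the spacetime algebra is the Pauli algebra,
i.e. `Cℓ(3,0) ≅ Matrix (Fin 2) (Fin 2) ℂ`. -/
theorem even_spacetime_algebra_iso_pauli :
    Nonempty (CliffordAlgebra.even Q13 ≃ₐ[ℝ] CliffordAlgebra Q30) ∧
    Nonempty (CliffordAlgebra.even Q13 ≃ₐ[ℝ] Matrix (Fin 2) (Fin 2) ℂ) := by
  exact ⟨⟨equivSTA⟩, ⟨equivSTA.trans pauliEquiv⟩⟩
end
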